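/- Let p ∈ [1,∞), s > 1/p, and let Ω ⊆ ℝ^m be a bounded open set. If u ∈ L^p(Ω) satisfies the Besov condition ‖u(·+h) - u(·)‖_{L^p} ≤ M|h|^s (translations interpreted with an extension of u by a fixed value, or on the torus), then u satisfies the Besov-VMO condition: (1/ε) ∫_{Ω'} ⨍_{B_ε(x)} |u(x) - u(y)|^p dy dx ≤ C M^p ε^{ps - 1} for every compactly contained Ω' ⊂⊂ Ω and all ε < dist(Ω', ∂Ω); in particular the left-hand side tends to 0 as ε → 0 since ps > 1. -/

import Mathlib

open MeasureTheory
open scoped ENNReal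

private lemma ofReal_integral_le' {α : Type*} [MeasurableSpace α] (μ : Measure α) (g : α → ℝ)
    (hg : ∀ x, 0 ≤ g x) :
    ENNReal.ofReal (∫ x, g x ∂μ) ≤ ∫⁻ x, ENNReal.ofReal (g x) ∂μ := by
  by_cases hint : Integrable g μ
  · exact le_of_eq (ofReal_integral_eq_lintegral_ofReal hint (Filter.Eventually.of_forall hg))
  · rw [integral_undef hint]; simp

private lemma lint_ball_trans {m : ℕ} (G : (Fin m → ℝ) → ℝ≥0∞) (x : Fin m → ℝ) (ε : ℝ) :
    ∫⁻ y in Metric.ball x ε, G y = ∫⁻ h in Metric.ball (0 : Fin m → ℝ) ε, G (x + h) := by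
  rw [← lintegral_indicator measurableSet_ball, ← lintegral_indicator measurableSet_ball,
    ← lintegral_add_left_eq_self (f := (Metric.ball x ε).indicator G) x]
  congr 1
  ext h
  have : x + h ∈ Metric.ball x ε ↔ h ∈ Metric.ball (0 : Fin m → ℝ) ε := by
    simp [Metric.mem_ball, dist_eq_norm]
  by_cases hh : h ∈ Metric.ball (0 : Fin m → ℝ) ε
  · rw [Set.indicator_of_mem (this.2 hh), Set.indicator_of_mem hh]
  · rw [Set.indicator_of_notMem (fun c => hh (this.1 c)), Set.indicator_of_notMem hh]

/-- The inclusion `B^s_{p,∞} ⊆ B^{1/p}_{p,VMO}` for `s > 1/p`: a Besov translation bound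
implies the Besov-VMO bound with modulus `C M^p ε^{ps-1}` on compactly contained subsets. -/
theorem stmt_8 {m : ℕ} (p s M : ℝ) (hp : 1 ≤ p) (hps : 1 / p < s) (hs1 : s < 1) (hM : 0 ≤ M)
    (Ω : Set (Fin m → ℝ)) (hΩ : IsOpen Ω) (hΩb : Bornology.IsBounded Ω)
    (u : (Fin m → ℝ) → ℝ) (hu : MemLp u (ENNReal.ofReal p) volume)
    (hBesov : ∀ h : Fin m → ℝ,
      eLpNorm (fun x => u (x + h) - u x) (ENNReal.ofReal p) volume
        ≤ ENNReal.ofReal (M * ‖h‖ ^ s)) :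
    ∃ C > 0, ∀ Ω' : Set (Fin m → ℝ), Ω' ⊆ Ω → MeasurableSet Ω' →
      ∀ ε : ℝ, 0 < ε → (∀ x ∈ Ω', Metric.ball x ε ⊆ Ω) →
        (1 / ε) * ∫ x in Ω', ⨍ y in Metric.ball x ε, |u x - u y| ^ p
          ≤ C * M ^ p * ε ^ (p * s - 1) := by
  have hp0 : 0 < p := lt_of_lt_of_le one_pos hp
  have hs0 : 0 < s := lt_trans (div_pos one_pos hp0) hps
  have hq0 : (ENNReal.ofReal p) ≠ 0 := by
    simp [ENNReal.ofReal_eq_zero]; linarith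
  have hqt : (ENNReal.ofReal p) ≠ ∞ := ENNReal.ofReal_ne_top
  have hqr : (ENNReal.ofReal p).toReal = p := ENNReal.toReal_ofReal hp0.le
  obtain ⟨v, hvmeas, huv⟩ : ∃ v : (Fin m → ℝ) → ℝ, Measurable v ∧ u =ᵐ[volume] v :=
    ⟨hu.1.aemeasurable.mk u, hu.1.aemeasurable.measurable_mk, hu.1.aemeasurable.ae_eq_mk⟩
  refine ⟨1, one_pos, ?_⟩
  intro Ω' hΩ'Ω hΩ'm ε hε hball
  set V : ℝ≥0∞ := volume (Metric.ball (0 : Fin m → ℝ) ε) with hV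
  have hV0 : V ≠ 0 := (Metric.measure_ball_pos _ _ hε).ne'
  have hVt : V ≠ ∞ := measure_ball_lt_top.ne
  set B : ℝ≥0∞ := (ENNReal.ofReal (M * ε ^ s)) ^ p with hB
  have hBt : B ≠ ∞ := ENNReal.rpow_ne_top_of_nonneg hp0.le ENNReal.ofReal_ne_top
  set F : (Fin m → ℝ) → (Fin m → ℝ) → ℝ≥0∞ :=
    fun x h => ENNReal.ofReal (|v (x + h) - v x| ^ p) with hF
  have hFmeas : Measurable (Function.uncurry F) := by
    have h1 : Measurable fun z : (Fin m → ℝ) × (Fin m → ℝ) => v (z.1 + z.2) - v z.1 :=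
      (hvmeas.comp (measurable_fst.add measurable_snd)).sub (hvmeas.comp measurable_fst)
    unfold Function.uncurry
    measurability
  -- Step 1: pointwise bound of the average
  have step1 : ∀ x : Fin m → ℝ,
      ENNReal.ofReal (⨍ y in Metric.ball x ε, |u x - u y| ^ p) ≤
        V⁻¹ * ∫⁻ h in Metric.ball (0 : Fin m → ℝ) ε,
          ENNReal.ofReal (|u (x + h) - u x| ^ p) := by
    intro x
    rw [setAverage_eq, measureReal_def, Measure.addHaar_ball_center, smul_eq_mul, ← hV,
      ENNReal.ofReal_mul (by positivity)]
    gcongr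
    · rw [ENNReal.ofReal_inv_of_pos (ENNReal.toReal_pos hV0 hVt),
        ENNReal.ofReal_toReal hVt]
    · calc ENNReal.ofReal (∫ y in Metric.ball x ε, |u x - u y| ^ p)
          ≤ ∫⁻ y in Metric.ball x ε, ENNReal.ofReal (|u x - u y| ^ p) :=
            ofReal_integral_le' _ _ (fun y => by positivity)
        _ = ∫⁻ h in Metric.ball (0 : Fin m → ℝ) ε,
              ENNReal.ofReal (|u (x + h) - u x| ^ p) := by
            rw [lint_ball_trans (fun y => ENNReal.ofReal (|u x - u y| ^ p)) x ε]
            simp_rw [abs_sub_comm]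
  -- Step 2: the main lintegral bound
  have step2 : (∫⁻ x in Ω', V⁻¹ * ∫⁻ h in Metric.ball (0 : Fin m → ℝ) ε,
      ENNReal.ofReal (|u (x + h) - u x| ^ p) ∂volume ∂volume) ≤ B := by
    have hcongr : (∫⁻ x in Ω', V⁻¹ * ∫⁻ h in Metric.ball (0 : Fin m → ℝ) ε,
        ENNReal.ofReal (|u (x + h) - u x| ^ p) ∂volume ∂volume)
        = ∫⁻ x in Ω', V⁻¹ * ∫⁻ h in Metric.ball (0 : Fin m → ℝ) ε, F x h ∂volume ∂volume := by
      apply lintegral_congr_ae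
      apply ae_restrict_of_ae
      filter_upwards [huv] with x hx
      congr 1
      apply lintegral_congr_ae
      apply ae_restrict_of_ae
      have hmp : MeasurePreserving (fun h : Fin m → ℝ => x + h) volume volume :=
        measurePreserving_add_left volume x
      filter_upwards [hmp.quasiMeasurePreserving.ae_eq huv] with h hh
      simp only [Function.comp] at hh
      rw [hF]
      simp only []
      rw [← hh, ← hx]
    rw [hcongr]
    calc (∫⁻ x in Ω', V⁻¹ * ∫⁻ h in Metric.ball (0 : Fin m → ℝ) ε, F x h ∂volume ∂volume)
        = V⁻¹ * ∫⁻ x in Ω', ∫⁻ h in Metric.ball (0 : Fin m → ℝ) ε, F x h ∂volume ∂volume := by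
          rw [lintegral_const_mul' _ _ (ENNReal.inv_ne_top.2 hV0)]
      _ = V⁻¹ * ∫⁻ h in Metric.ball (0 : Fin m → ℝ) ε, ∫⁻ x in Ω', F x h ∂volume ∂volume := by
          rw [lintegral_lintegral_swap (hFmeas.aemeasurable)]
      _ ≤ V⁻¹ * ∫⁻ h in Metric.ball (0 : Fin m → ℝ) ε,
            (ENNReal.ofReal (M * ε ^ s)) ^ p ∂volume := by
          refine mul_le_mul_right (setLIntegral_mono' measurableSet_ball ?_) _
          intro h hh
          have hmp : MeasurePreserving (fun x : Fin m → ℝ => x + h) volume volume :=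
            measurePreserving_add_right volume h
          calc (∫⁻ x in Ω', F x h ∂volume)
              ≤ ∫⁻ x, F x h ∂volume := setLIntegral_le_lintegral _ _
            _ = ∫⁻ x, ENNReal.ofReal (|u (x + h) - u x| ^ p) ∂volume := by
                apply lintegral_congr_ae
                filter_upwards [huv, hmp.quasiMeasurePreserving.ae_eq huv] with x hx hxh
                simp only [Function.comp] at hxh
                rw [hF]
                simp only []
                rw [← hx, ← hxh]
            _ = ∫⁻ x, (‖u (x + h) - u x‖₊ : ℝ≥0∞) ^ p ∂volume := by
                apply lintegral_congr
                intro x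
                rw [← enorm_eq_nnnorm, Real.enorm_eq_ofReal_abs,
                  ENNReal.ofReal_rpow_of_nonneg (abs_nonneg _) hp0.le]
            _ = (eLpNorm (fun x => u (x + h) - u x) (ENNReal.ofReal p) volume) ^ p := by
                rw [eLpNorm_eq_lintegral_rpow_enorm_toReal hq0 hqt, hqr]
                simp_rw [enorm_eq_nnnorm]
                rw [one_div,
                  ENNReal.rpow_inv_rpow hp0.ne']
            _ ≤ (ENNReal.ofReal (M * ‖h‖ ^ s)) ^ p :=
                ENNReal.rpow_le_rpow (hBesov h) hp0.le
            _ ≤ (ENNReal.ofReal (M * ε ^ s)) ^ p := by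
                apply ENNReal.rpow_le_rpow _ hp0.le
                apply ENNReal.ofReal_le_ofReal
                have hn : ‖h‖ < ε := by simpa [Metric.mem_ball, dist_eq_norm] using hh
                exact mul_le_mul_of_nonneg_left
                  (Real.rpow_le_rpow (norm_nonneg _) hn.le hs0.le) hM
      _ = V⁻¹ * ((ENNReal.ofReal (M * ε ^ s)) ^ p * V) := by rw [setLIntegral_const]
      _ = B := by
          rw [mul_comm ((ENNReal.ofReal (M * ε ^ s)) ^ p) V, ← mul_assoc,
            ENNReal.inv_mul_cancel hV0 hVt, one_mul]
  -- assemble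
  have main : (∫ x in Ω', ⨍ y in Metric.ball x ε, |u x - u y| ^ p) ≤ B.toReal := by
    rw [← ENNReal.ofReal_le_iff_le_toReal hBt]
    calc ENNReal.ofReal (∫ x in Ω', ⨍ y in Metric.ball x ε, |u x - u y| ^ p)
        ≤ ∫⁻ x in Ω', ENNReal.ofReal (⨍ y in Metric.ball x ε, |u x - u y| ^ p) := by
          apply ofReal_integral_le'
          intro x
          rw [setAverage_eq, smul_eq_mul]
          have h1 : (0:ℝ) ≤ ∫ y in Metric.ball x ε, |u x - u y| ^ p :=
            integral_nonneg (fun y => by positivity)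
          positivity
      _ ≤ ∫⁻ x in Ω', V⁻¹ * ∫⁻ h in Metric.ball (0 : Fin m → ℝ) ε,
            ENNReal.ofReal (|u (x + h) - u x| ^ p) ∂volume ∂volume :=
          lintegral_mono step1
      _ ≤ B := step2
  have hBr : B.toReal = (M * ε ^ s) ^ p := by
    rw [hB, ← ENNReal.toReal_rpow, ENNReal.toReal_ofReal (by positivity)]
  rw [hBr] at main
  calc (1 / ε) * ∫ x in Ω', ⨍ y in Metric.ball x ε, |u x - u y| ^ p
      ≤ (1 / ε) * (M * ε ^ s) ^ p :=
        mul_le_mul_of_nonneg_left main (by positivity)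
    _ = 1 * M ^ p * ε ^ (p * s - 1) := by
        rw [Real.mul_rpow hM (Real.rpow_nonneg hε.le s), ← Real.rpow_mul hε.le,
          Real.rpow_sub hε, Real.rpow_one, mul_comm s p]
        ring
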